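/- arXiv:2410.08077 — 2 statements merged into one kernel-verified Lean document; each statement's English description precedes it below -/
import Mathlib

section
/- Let H be a linear forest (a graph each of whose connected components is a path). If G is an H-free graph (contains no induced subgraph isomorphic to H) and uv is an edge of G, then the graph G/uv obtained by contracting uv (deleting u and v and adding a new vertex w adjacent to all of (N(u) ∪ N(v)) \ {u,v}) is also H-free. -/
open SimpleGraph

/-- `G` contains no induced subgraph isomorphic to `H`. -/
def SimpleGraph.FreeInduced {α β : Type*} (G : SimpleGraph α) (H : SimpleGraph β) : Prop :=
  IsEmpty (H ↪g G)

/-- The graph obtained from `G` by contracting the edge `uv`: delete `u` and `v` and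
add a new vertex (`none`) adjacent to `(N(u) ∪ N(v)) \ {u, v}`. -/
def SimpleGraph.contract {α : Type*} (G : SimpleGraph α) (u v : α) :
    SimpleGraph (Option {x : α // x ≠ u ∧ x ≠ v}) where
  Adj a b :=
    match a, b with
    | none, none => False
    | none, some x => G.Adj u x.1 ∨ G.Adj v x.1
    | some x, none => G.Adj u x.1 ∨ G.Adj v x.1
    | some x, some y => G.Adj x.1 y.1
  symm := by
    refine ⟨?_⟩
    rintro (_ | x) (_ | y) h
    · exact h
    · exact h
    · exact h
    · exact h.symm
  loopless := by
    refine ⟨?_⟩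
    rintro (_ | x) h
    · exact h
    · exact G.loopless.irrefl _ h

/-- The disjoint union of a path on 5 vertices and `r` isolated vertices. -/
def P5rK1 (r : ℕ) : SimpleGraph (Fin 5 ⊕ Fin r) :=
  pathGraph 5 ⊕g (⊥ : SimpleGraph (Fin r))

/-- `u` and `v` are true twins: adjacent with the same neighbours outside the pair. -/
def SimpleGraph.TrueTwins {α : Type*} (G : SimpleGraph α) (u v : α) : Prop :=
  G.Adj u v ∧ ∀ w, w ≠ u → w ≠ v → (G.Adj u w ↔ G.Adj v w)

/-- The external neighbourhood of a set `S`. -/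
def SimpleGraph.extN {α : Type*} (G : SimpleGraph α) (S : Set α) : Set α :=
  {v | v ∉ S ∧ ∃ u ∈ S, G.Adj u v}

/-- `s` is an independent set of `G`. -/
def SimpleGraph.IsIndep {α : Type*} (G : SimpleGraph α) (s : Set α) : Prop :=
  ∀ ⦃x⦄, x ∈ s → ∀ ⦃y⦄, y ∈ s → ¬ G.Adj x y

/-- `X` and `Y` are anticomplete: disjoint and with no edges between them. -/
def SimpleGraph.Anticomplete {α : Type*} (G : SimpleGraph α) (X Y : Set α) : Prop :=
  Disjoint X Y ∧ ∀ x ∈ X, ∀ y ∈ Y, ¬ G.Adj x y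

/-- The blob graph of a family `𝒞` of (vertex sets of) subgraphs of `G`. -/
def blob {α : Type*} (G : SimpleGraph α) (𝒞 : Set (Set α)) : SimpleGraph 𝒞 where
  Adj C C' := C ≠ C' ∧ ((C.1 ∩ C'.1).Nonempty ∨ ∃ x ∈ C.1, ∃ y ∈ C'.1, G.Adj x y)
  symm := by
    refine ⟨?_⟩
    rintro C C' ⟨hne, h⟩
    refine ⟨hne.symm, ?_⟩
    rcases h with h | ⟨x, hx, y, hy, hxy⟩
    · exact Or.inl (by rwa [Set.inter_comm])
    · exact Or.inr ⟨y, hy, x, hx, hxy.symm⟩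
  loopless := by refine ⟨?_⟩; rintro C ⟨hne, -⟩; exact hne rfl

/-- Linear forest: every connected component is a path. -/
def IsLinearForest {β : Type*} [Fintype β] (H : SimpleGraph β) : Prop :=
  ∀ c : H.ConnectedComponent, ∃ n, Nonempty ((H.induce c.supp) ≃g pathGraph n)


/-- Replace a single vertex image. -/
lemma repl {α β : Type*} (G : SimpleGraph α) (H : SimpleGraph β) (z : β) (f : β → α) (t : α)
    (hinj : ∀ w w', w ≠ z → w' ≠ z → f w = f w' → w = w')
    (hft : ∀ w, w ≠ z → f w ≠ t)
    (hadj : ∀ w w', w ≠ z → w' ≠ z → (G.Adj (f w) (f w') ↔ H.Adj w w'))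
    (ht : ∀ w, w ≠ z → (G.Adj t (f w) ↔ H.Adj z w)) :
    Nonempty (H ↪g G) := by
  classical
  refine ⟨⟨⟨fun w => if w = z then t else f w, ?_⟩, ?_⟩⟩
  · intro w w' h
    by_cases hw : w = z <;> by_cases hw' : w' = z <;> simp [hw, hw'] at h ⊢
    · exact absurd h.symm (hft w' hw')
    · exact absurd h (hft w hw)
    · exact hinj w w' hw hw' h
  · intro w w'
    show G.Adj (if w = z then t else f w) (if w' = z then t else f w') ↔ H.Adj w w'
    by_cases hw : w = z <;> by_cases hw' : w' = z
    · subst hw hw'; simp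
    · simp only [if_pos hw, if_neg hw']; subst hw; exact ht w' hw'
    · simp only [if_pos hw', if_neg hw]; subst hw'
      rw [G.adj_comm, ht w hw, H.adj_comm]
    · simp only [if_neg hw, if_neg hw']; exact hadj w w' hw hw'

private noncomputable def gfun {α β : Type*} (f : β → α) (u v : α) {n : ℕ} (q : Fin n → β)
    (i : Fin n) (j : Fin n) : α :=
  if j.1 < i.1 then f (q j)
  else if j.1 = i.1 then u
  else if j.1 = i.1 + 1 then v
  else f (q ⟨j.1 - 1, Nat.lt_of_le_of_lt (Nat.sub_le _ _) j.2⟩)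

open Classical in
private noncomputable def psifun {α β : Type*} (f : β → α) (u v : α) {n : ℕ} (q : Fin n → β)
    (i : Fin n) (w : β) : α :=
  if h : ∃ j, q j = w then gfun f u v q i h.choose else f w

section Shift

variable {α β : Type*} {G : SimpleGraph α} {H : SimpleGraph β} {z : β} {f : β → α}
    {u v : α} {n : ℕ} {q : Fin n → β} {i : Fin n}
    (hqinj : Function.Injective q)
    (hqz : q i = z)
    (hqadj : ∀ j j', H.Adj (q j) (q j') ↔ (pathGraph n).Adj j j')
    (hqout : ∀ w, (∀ j, q j ≠ w) → ∀ j, ¬ H.Adj w (q j))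
    (huv : G.Adj u v)
    (hinj : ∀ w w', w ≠ z → w' ≠ z → f w = f w' → w = w')
    (hfu : ∀ w, w ≠ z → f w ≠ u) (hfv : ∀ w, w ≠ z → f w ≠ v)
    (hadj : ∀ w w', w ≠ z → w' ≠ z → (G.Adj (f w) (f w') ↔ H.Adj w w'))
    (hnonbr : ∀ w, w ≠ z → ¬ H.Adj z w → ¬G.Adj u (f w) ∧ ¬G.Adj v (f w))
    (hi0 : 0 < i.1) (hin : i.1 + 1 < n)

include hqinj hqz in
private lemma qne_z : ∀ j : Fin n, j ≠ i → q j ≠ z := by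
  intro j hj he
  exact hj (hqinj (he.trans hqz.symm))

include hqz hqadj in
private lemma nbr_iff : ∀ j : Fin n, H.Adj z (q j) ↔ (j.1 + 1 = i.1 ∨ i.1 + 1 = j.1) := by
  intro j
  rw [← hqz, hqadj, pathGraph_adj]
  omega

end Shift

section Shift2

variable {α β : Type*} {G : SimpleGraph α} {H : SimpleGraph β} {z : β} {f : β → α}
    {u v : α} {n : ℕ} {q : Fin n → β} {i : Fin n}

private lemma glt (f : β → α) (u v : α) (q : Fin n → β) (i : Fin n) (j : Fin n)
    (h : j.1 < i.1) : gfun f u v q i j = f (q j) := by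
  simp [gfun, h]

private lemma gi (f : β → α) (u v : α) (q : Fin n → β) (i : Fin n) :
    gfun f u v q i i = u := by
  simp [gfun]

private lemma gi1 (f : β → α) (u v : α) (q : Fin n → β) (i : Fin n) (j : Fin n)
    (h : j.1 = i.1 + 1) : gfun f u v q i j = v := by
  simp only [gfun]
  rw [if_neg (by omega), if_neg (by omega), if_pos h]

private lemma ggt (f : β → α) (u v : α) (q : Fin n → β) (i : Fin n) (j : Fin n)
    (h : i.1 + 1 < j.1) :
    gfun f u v q i j = f (q ⟨j.1 - 1, Nat.lt_of_le_of_lt (Nat.sub_le _ _) j.2⟩) := by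
  simp only [gfun]
  rw [if_neg (by omega), if_neg (by omega), if_neg (by omega)]

end Shift2
private lemma gkey {α β : Type*} {G : SimpleGraph α} {H : SimpleGraph β} {z : β} {f : β → α}
    {u v : α} {n : ℕ} {q : Fin n → β} {i : Fin n}
    (hqinj : Function.Injective q)
    (hqz : q i = z)
    (hqadj : ∀ j j', H.Adj (q j) (q j') ↔ (pathGraph n).Adj j j')
    (huv : G.Adj u v)
    (hinj : ∀ w w', w ≠ z → w' ≠ z → f w = f w' → w = w')
    (hfu : ∀ w, w ≠ z → f w ≠ u) (hfv : ∀ w, w ≠ z → f w ≠ v)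
    (hadj : ∀ w w', w ≠ z → w' ≠ z → (G.Adj (f w) (f w') ↔ H.Adj w w'))
    (hnonbr : ∀ w, w ≠ z → ¬ H.Adj z w → ¬G.Adj u (f w) ∧ ¬G.Adj v (f w))
    (hi0 : 0 < i.1) (hin : i.1 + 1 < n)
    (hua : G.Adj u (f (q ⟨i.1 - 1, Nat.lt_of_le_of_lt (Nat.sub_le _ _) i.2⟩)))
    (hva : ¬ G.Adj v (f (q ⟨i.1 - 1, Nat.lt_of_le_of_lt (Nat.sub_le _ _) i.2⟩)))
    (hub : ¬ G.Adj u (f (q ⟨i.1 + 1, hin⟩)))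
    (hvb : G.Adj v (f (q ⟨i.1 + 1, hin⟩))) :
    ∀ j j' : Fin n, j.1 < j'.1 →
      gfun f u v q i j ≠ gfun f u v q i j' ∧
      (G.Adj (gfun f u v q i j) (gfun f u v q i j') ↔ (pathGraph n).Adj j j') := by
  intro j j' hlt
  have hPA : ∀ a b : Fin n, (pathGraph n).Adj a b ↔ (a.1 + 1 = b.1 ∨ b.1 + 1 = a.1) :=
    fun a b => pathGraph_adj
  have hqz' : ∀ j : Fin n, j ≠ i → q j ≠ z := qne_z hqinj hqz
  have hnbr : ∀ j : Fin n, H.Adj z (q j) ↔ (j.1 + 1 = i.1 ∨ i.1 + 1 = j.1) := nbr_iff hqz hqadj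
  have hzone : ∀ a : Fin n, a.1 < i.1 ∨ a.1 = i.1 ∨ a.1 = i.1 + 1 ∨ i.1 + 1 < a.1 :=
    fun a => by omega
  rcases hzone j with hj | hj | hj | hj <;> rcases hzone j' with hj' | hj' | hj' | hj'
  -- (<, <)
  · rw [glt f u v q i j hj, glt f u v q i j' hj']
    have n1 : q j ≠ z := hqz' j (Fin.ne_of_val_ne (by omega))
    have n2 : q j' ≠ z := hqz' j' (Fin.ne_of_val_ne (by omega))
    refine ⟨fun he => ?_, by rw [hadj _ _ n1 n2, hqadj]⟩
    exact absurd (hqinj (hinj _ _ n1 n2 he)) (Fin.ne_of_val_ne (by omega))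
  -- (<, = i)
  · rw [glt f u v q i j hj, show j' = i from Fin.val_injective hj', gi]
    have n1 : q j ≠ z := hqz' j (Fin.ne_of_val_ne (by omega))
    refine ⟨hfu _ n1, ?_⟩
    by_cases hc : j.1 + 1 = i.1
    · have e1 : q j = q ⟨i.1 - 1, Nat.lt_of_le_of_lt (Nat.sub_le _ _) i.2⟩ :=
        congrArg q (Fin.val_injective (by simp; omega))
      rw [e1]
      exact iff_of_true hua.symm ((hPA _ _).mpr (Or.inl (by omega)))
    · have nz : ¬ H.Adj z (q j) := fun h => by rcases (hnbr j).mp h with h | h <;> omega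
      exact iff_of_false (fun h => (hnonbr _ n1 nz).1 h.symm)
        (fun h => by rcases (hPA _ _).mp h with h | h <;> omega)
  -- (<, = i+1)
  · rw [glt f u v q i j hj, gi1 f u v q i j' hj']
    have n1 : q j ≠ z := hqz' j (Fin.ne_of_val_ne (by omega))
    refine ⟨hfv _ n1, iff_of_false ?_
      (fun h => by rcases (hPA _ _).mp h with h | h <;> omega)⟩
    by_cases hc : j.1 + 1 = i.1
    · have e1 : q j = q ⟨i.1 - 1, Nat.lt_of_le_of_lt (Nat.sub_le _ _) i.2⟩ :=
        congrArg q (Fin.val_injective (by simp; omega))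
      rw [e1]
      exact fun h => hva h.symm
    · have nz : ¬ H.Adj z (q j) := fun h => by rcases (hnbr j).mp h with h | h <;> omega
      exact fun h => (hnonbr _ n1 nz).2 h.symm
  -- (<, >)
  · rw [glt f u v q i j hj, ggt f u v q i j' hj']
    have n1 : q j ≠ z := hqz' j (Fin.ne_of_val_ne (by omega))
    have n2 : q ⟨j'.1 - 1, Nat.lt_of_le_of_lt (Nat.sub_le _ _) j'.2⟩ ≠ z :=
      hqz' _ (Fin.ne_of_val_ne (by simp; omega))
    refine ⟨fun he => ?_, ?_⟩
    · have h2 := congrArg Fin.val (hqinj (hinj _ _ n1 n2 he))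
      simp at h2; omega
    · rw [hadj _ _ n1 n2, hqadj, hPA, hPA]
      simp only [Fin.val_mk]
      omega
  -- (= i, <)
  · exact absurd hlt (by omega)
  -- (= i, = i)
  · exact absurd hlt (by omega)
  -- (= i, = i+1)
  · rw [show j = i from Fin.val_injective hj, gi, gi1 f u v q i j' hj']
    exact ⟨huv.ne, iff_of_true huv ((hPA _ _).mpr (Or.inl (by omega)))⟩
  -- (= i, >)
  · rw [show j = i from Fin.val_injective hj, gi, ggt f u v q i j' hj']
    have n2 : q ⟨j'.1 - 1, Nat.lt_of_le_of_lt (Nat.sub_le _ _) j'.2⟩ ≠ z :=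
      hqz' _ (Fin.ne_of_val_ne (by simp; omega))
    refine ⟨Ne.symm (hfu _ n2), iff_of_false ?_
      (fun h => by rcases (hPA _ _).mp h with h | h <;> omega)⟩
    by_cases hc : j'.1 = i.1 + 2
    · have e1 : q ⟨j'.1 - 1, Nat.lt_of_le_of_lt (Nat.sub_le _ _) j'.2⟩ = q ⟨i.1 + 1, hin⟩ :=
        congrArg q (Fin.val_injective (by simp; omega))
      rw [e1]; exact hub
    · have nz : ¬ H.Adj z (q ⟨j'.1 - 1, Nat.lt_of_le_of_lt (Nat.sub_le _ _) j'.2⟩) :=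
        fun h => by rcases (hnbr _).mp h with h | h <;> simp [Fin.val_mk] at h <;> omega
      exact (hnonbr _ n2 nz).1
  -- (= i+1, <)
  · exact absurd hlt (by omega)
  -- (= i+1, = i)
  · exact absurd hlt (by omega)
  -- (= i+1, = i+1)
  · exact absurd hlt (by omega)
  -- (= i+1, >)
  · rw [gi1 f u v q i j hj, ggt f u v q i j' hj']
    have n2 : q ⟨j'.1 - 1, Nat.lt_of_le_of_lt (Nat.sub_le _ _) j'.2⟩ ≠ z :=
      hqz' _ (Fin.ne_of_val_ne (by simp; omega))
    refine ⟨Ne.symm (hfv _ n2), ?_⟩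
    by_cases hc : j'.1 = i.1 + 2
    · have e1 : q ⟨j'.1 - 1, Nat.lt_of_le_of_lt (Nat.sub_le _ _) j'.2⟩ = q ⟨i.1 + 1, hin⟩ :=
        congrArg q (Fin.val_injective (by simp; omega))
      rw [e1]
      exact iff_of_true hvb ((hPA _ _).mpr (Or.inl (by omega)))
    · have nz : ¬ H.Adj z (q ⟨j'.1 - 1, Nat.lt_of_le_of_lt (Nat.sub_le _ _) j'.2⟩) :=
        fun h => by rcases (hnbr _).mp h with h | h <;> simp [Fin.val_mk] at h <;> omega
      exact iff_of_false (fun h => (hnonbr _ n2 nz).2 h)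
        (fun h => by rcases (hPA _ _).mp h with h | h <;> omega)
  -- (>, <)
  · exact absurd hlt (by omega)
  -- (>, = i)
  · exact absurd hlt (by omega)
  -- (>, = i+1)
  · exact absurd hlt (by omega)
  -- (>, >)
  · rw [ggt f u v q i j hj, ggt f u v q i j' hj']
    have n1 : q ⟨j.1 - 1, Nat.lt_of_le_of_lt (Nat.sub_le _ _) j.2⟩ ≠ z :=
      hqz' _ (Fin.ne_of_val_ne (by simp; omega))
    have n2 : q ⟨j'.1 - 1, Nat.lt_of_le_of_lt (Nat.sub_le _ _) j'.2⟩ ≠ z :=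
      hqz' _ (Fin.ne_of_val_ne (by simp; omega))
    refine ⟨fun he => ?_, ?_⟩
    · have h2 := congrArg Fin.val (hqinj (hinj _ _ n1 n2 he))
      simp at h2; omega
    · rw [hadj _ _ n1 n2, hqadj, hPA, hPA]
      simp only [Fin.val_mk]
      omega

private lemma shiftlem {α β : Type*} {G : SimpleGraph α} {H : SimpleGraph β} {z : β} {f : β → α}
    {u v : α} {n : ℕ} {q : Fin n → β} {i : Fin n}
    (hqinj : Function.Injective q)
    (hqz : q i = z)
    (hqadj : ∀ j j', H.Adj (q j) (q j') ↔ (pathGraph n).Adj j j')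
    (hqout : ∀ w, (∀ j, q j ≠ w) → ∀ j, ¬ H.Adj w (q j))
    (huv : G.Adj u v)
    (hinj : ∀ w w', w ≠ z → w' ≠ z → f w = f w' → w = w')
    (hfu : ∀ w, w ≠ z → f w ≠ u) (hfv : ∀ w, w ≠ z → f w ≠ v)
    (hadj : ∀ w w', w ≠ z → w' ≠ z → (G.Adj (f w) (f w') ↔ H.Adj w w'))
    (hnonbr : ∀ w, w ≠ z → ¬ H.Adj z w → ¬G.Adj u (f w) ∧ ¬G.Adj v (f w))
    (hi0 : 0 < i.1) (hin : i.1 + 1 < n)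
    (hua : G.Adj u (f (q ⟨i.1 - 1, Nat.lt_of_le_of_lt (Nat.sub_le _ _) i.2⟩)))
    (hva : ¬ G.Adj v (f (q ⟨i.1 - 1, Nat.lt_of_le_of_lt (Nat.sub_le _ _) i.2⟩)))
    (hub : ¬ G.Adj u (f (q ⟨i.1 + 1, hin⟩)))
    (hvb : G.Adj v (f (q ⟨i.1 + 1, hin⟩))) :
    Nonempty (H ↪g G) := by
  classical
  have key := gkey hqinj hqz hqadj huv hinj hfu hfv hadj hnonbr hi0 hin hua hva hub hvb
  set g := gfun f u v q i with hg
  have gne : ∀ j j' : Fin n, j ≠ j' → g j ≠ g j' := by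
    intro j j' hne
    rcases Nat.lt_or_ge j.1 j'.1 with h | h
    · exact (key j j' h).1
    · have h' : j'.1 < j.1 := lt_of_le_of_ne h (fun e => hne (Fin.val_injective e.symm))
      exact ((key j' j h').1).symm
  have gadj : ∀ j j' : Fin n, G.Adj (g j) (g j') ↔ H.Adj (q j) (q j') := by
    intro j j'
    rw [hqadj]
    rcases Nat.lt_trichotomy j.1 j'.1 with h | h | h
    · exact (key j j' h).2
    · have : j = j' := Fin.val_injective h
      subst this
      exact iff_of_false (G.irrefl) ((pathGraph n).irrefl)
    · rw [G.adj_comm, (pathGraph n).adj_comm]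
      exact (key j' j h).2
  have gvals : ∀ j : Fin n, (∃ j'' : Fin n, q j'' ≠ z ∧ g j = f (q j'')) ∨ g j = u ∨ g j = v := by
    intro j
    rcases (show j.1 < i.1 ∨ j.1 = i.1 ∨ j.1 = i.1 + 1 ∨ i.1 + 1 < j.1 from by omega)
      with h | h | h | h
    · exact Or.inl ⟨j, qne_z hqinj hqz j (Fin.ne_of_val_ne (by omega)), glt f u v q i j h⟩
    · exact Or.inr (Or.inl (by rw [hg, show j = i from Fin.val_injective h, gi]))
    · exact Or.inr (Or.inr (gi1 f u v q i j h))
    · exact Or.inl ⟨⟨j.1 - 1, Nat.lt_of_le_of_lt (Nat.sub_le _ _) j.2⟩,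
        qne_z hqinj hqz _ (Fin.ne_of_val_ne (by simp only [Fin.val_mk]; omega)),
        ggt f u v q i j h⟩
  have hwz' : ∀ w : β, (∀ j, q j ≠ w) → w ≠ z := fun w hw e => hw i (hqz.trans e.symm)
  have hwnb : ∀ w : β, (∀ j, q j ≠ w) → ¬ H.Adj z w :=
    fun w hw hh => hqout w hw i (hqz ▸ hh.symm)
  have hout_ne : ∀ (w : β), (∀ j, q j ≠ w) → ∀ j, g j ≠ f w := by
    intro w hw j he
    have hwz : w ≠ z := hwz' w hw
    rcases gvals j with ⟨j'', hj''z, hgj⟩ | hgj | hgj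
    · rw [hgj] at he
      exact hw j'' (hinj _ _ hj''z hwz he)
    · rw [hgj] at he
      exact hfu w hwz he.symm
    · rw [hgj] at he
      exact hfv w hwz he.symm
  have hout_nadj : ∀ (w : β), (∀ j, q j ≠ w) → ∀ j, ¬ G.Adj (g j) (f w) := by
    intro w hw j h
    have hwz : w ≠ z := hwz' w hw
    rcases gvals j with ⟨j'', hj''z, hgj⟩ | hgj | hgj
    · rw [hgj] at h
      exact hqout w hw j'' (((hadj _ _ hj''z hwz).mp h).symm)
    · rw [hgj] at h
      exact (hnonbr w hwz (hwnb w hw)).1 h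
    · rw [hgj] at h
      exact (hnonbr w hwz (hwnb w hw)).2 h
  have hpsiq : ∀ j, psifun f u v q i (q j) = g j := by
    intro j
    have hex : ∃ j', q j' = q j := ⟨j, rfl⟩
    simp only [psifun, dif_pos hex]
    exact congrArg g (hqinj hex.choose_spec)
  have hpsiout : ∀ w, (∀ j, q j ≠ w) → psifun f u v q i w = f w := by
    intro w hw
    simp only [psifun]
    rw [dif_neg]
    rintro ⟨j, hj⟩
    exact hw j hj
  refine ⟨⟨⟨psifun f u v q i, ?_⟩, ?_⟩⟩
  · intro w w' he
    by_cases hw : ∃ j, q j = w <;> by_cases hw' : ∃ j, q j = w'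
    · obtain ⟨j, rfl⟩ := hw; obtain ⟨j', rfl⟩ := hw'
      rw [hpsiq, hpsiq] at he
      by_contra hne
      exact gne j j' (fun e => hne (congrArg q e)) he
    · obtain ⟨j, rfl⟩ := hw
      push_neg at hw'
      rw [hpsiq, hpsiout w' hw'] at he
      exact absurd he (hout_ne w' hw' j)
    · obtain ⟨j', rfl⟩ := hw'
      push_neg at hw
      rw [hpsiout w hw, hpsiq] at he
      exact absurd he.symm (hout_ne w hw j')
    · push_neg at hw hw'
      rw [hpsiout w hw, hpsiout w' hw'] at he
      exact hinj _ _ (hwz' w hw) (hwz' w' hw') he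
  · intro w w'
    show G.Adj (psifun f u v q i w) (psifun f u v q i w') ↔ H.Adj w w'
    by_cases hw : ∃ j, q j = w <;> by_cases hw' : ∃ j, q j = w'
    · obtain ⟨j, rfl⟩ := hw; obtain ⟨j', rfl⟩ := hw'
      rw [hpsiq, hpsiq]
      exact gadj j j'
    · obtain ⟨j, rfl⟩ := hw
      push_neg at hw'
      rw [hpsiq, hpsiout w' hw']
      exact iff_of_false (hout_nadj w' hw' j) (fun h => hqout w' hw' j h.symm)
    · obtain ⟨j', rfl⟩ := hw'
      push_neg at hw
      rw [hpsiout w hw, hpsiq, G.adj_comm, H.adj_comm]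
      exact iff_of_false (hout_nadj w hw j') (fun h => hqout w hw j' h.symm)
    · push_neg at hw hw'
      rw [hpsiout w hw, hpsiout w' hw']
      exact hadj _ _ (hwz' w hw) (hwz' w' hw')

private lemma mainlem {α β : Type*} {G : SimpleGraph α} {H : SimpleGraph β} {z : β} {f : β → α}
    {u v : α}
    (hcomp : ∀ c : H.ConnectedComponent, ∃ n, Nonempty ((H.induce c.supp) ≃g pathGraph n))
    (huv : G.Adj u v)
    (hinj : ∀ w w', w ≠ z → w' ≠ z → f w = f w' → w = w')
    (hfu : ∀ w, w ≠ z → f w ≠ u) (hfv : ∀ w, w ≠ z → f w ≠ v)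
    (hadj : ∀ w w', w ≠ z → w' ≠ z → (G.Adj (f w) (f w') ↔ H.Adj w w'))
    (hzadj : ∀ w, w ≠ z → (H.Adj z w ↔ G.Adj u (f w) ∨ G.Adj v (f w))) :
    Nonempty (H ↪g G) := by
  classical
  have hnonbr : ∀ w, w ≠ z → ¬ H.Adj z w → ¬G.Adj u (f w) ∧ ¬G.Adj v (f w) := by
    intro w hwz hn
    exact ⟨fun h => hn ((hzadj w hwz).mpr (Or.inl h)),
      fun h => hn ((hzadj w hwz).mpr (Or.inr h))⟩
  by_cases hu : ∀ w, H.Adj z w → G.Adj u (f w)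
  · exact repl G H z f u hinj hfu hadj
      (fun w hw => ⟨fun h => Classical.byContradiction fun hn => (hnonbr w hw hn).1 h, hu w⟩)
  by_cases hv : ∀ w, H.Adj z w → G.Adj v (f w)
  · exact repl G H z f v hinj hfv hadj
      (fun w hw => ⟨fun h => Classical.byContradiction fun hn => (hnonbr w hw hn).2 h, hv w⟩)
  push_neg at hu hv
  obtain ⟨a, haz, hua'⟩ := hu
  obtain ⟨b, hbz, hvb'⟩ := hv
  have hanez : a ≠ z := haz.ne'
  have hbnez : b ≠ z := hbz.ne'
  have hva : G.Adj v (f a) := ((hzadj a hanez).mp haz).resolve_left hua'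
  have hub : G.Adj u (f b) := ((hzadj b hbnez).mp hbz).resolve_right hvb'
  have hab : a ≠ b := fun e => hvb' (e ▸ hva)
  set c := H.connectedComponentMk z with hc
  obtain ⟨n, ⟨e⟩⟩ := hcomp c
  set q : Fin n → β := fun j => ((e.symm j) : c.supp).1 with hq
  have hqinj : Function.Injective q := fun j j' h =>
    e.symm.injective (Subtype.val_injective h)
  have hzc : z ∈ c.supp := by rw [SimpleGraph.ConnectedComponent.mem_supp_iff]
  set i : Fin n := e ⟨z, hzc⟩ with hi
  have hqz : q i = z := by rw [hq, hi]; simp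
  have hqadj : ∀ j j', H.Adj (q j) (q j') ↔ (pathGraph n).Adj j j' := fun j j' =>
    e.symm.map_adj_iff
  have hqout : ∀ w, (∀ j, q j ≠ w) → ∀ j, ¬ H.Adj w (q j) := by
    intro w hw j hadj'
    have hmem : w ∈ c.supp := by
      rw [SimpleGraph.ConnectedComponent.mem_supp_iff,
        SimpleGraph.ConnectedComponent.connectedComponentMk_eq_of_adj hadj']
      exact (SimpleGraph.ConnectedComponent.mem_supp_iff _ _).mp (e.symm j).2
    exact hw (e ⟨w, hmem⟩) (by rw [hq]; simp)
  have haS : a ∈ c.supp := by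
    rw [SimpleGraph.ConnectedComponent.mem_supp_iff, hc]
    exact SimpleGraph.ConnectedComponent.connectedComponentMk_eq_of_adj haz.symm
  have hbS : b ∈ c.supp := by
    rw [SimpleGraph.ConnectedComponent.mem_supp_iff, hc]
    exact SimpleGraph.ConnectedComponent.connectedComponentMk_eq_of_adj hbz.symm
  set ia : Fin n := e ⟨a, haS⟩ with hia
  set ib : Fin n := e ⟨b, hbS⟩ with hib
  have hqia : q ia = a := by rw [hq, hia]; simp
  have hqib : q ib = b := by rw [hq, hib]; simp
  have hpa : i.1 + 1 = ia.1 ∨ ia.1 + 1 = i.1 := by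
    have := (hqadj i ia).mp (by rw [hqz, hqia]; exact haz)
    exact pathGraph_adj.mp this
  have hpb : i.1 + 1 = ib.1 ∨ ib.1 + 1 = i.1 := by
    have := (hqadj i ib).mp (by rw [hqz, hqib]; exact hbz)
    exact pathGraph_adj.mp this
  have hiaib : ia ≠ ib := fun e' => hab (by rw [← hqia, ← hqib, e'])
  have hiaib' : ia.1 ≠ ib.1 := Fin.val_ne_of_ne hiaib
  rcases hpa with hpa | hpa <;> rcases hpb with hpb | hpb
  · exact absurd hiaib' (by omega)
  · -- a at i+1, b at i-1 : use u,v as is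
    have hi0 : 0 < i.1 := by omega
    have hin : i.1 + 1 < n := by omega
    have eA : q ⟨i.1 - 1, Nat.lt_of_le_of_lt (Nat.sub_le _ _) i.2⟩ = b := by
      rw [show (⟨i.1 - 1, Nat.lt_of_le_of_lt (Nat.sub_le _ _) i.2⟩ : Fin n) = ib from
        Fin.val_injective (by simp only [Fin.val_mk]; omega), hqib]
    have eB : q ⟨i.1 + 1, hin⟩ = a := by
      rw [show (⟨i.1 + 1, hin⟩ : Fin n) = ia from
        Fin.val_injective (by simp only [Fin.val_mk]; omega), hqia]
    exact shiftlem hqinj hqz hqadj hqout huv hinj hfu hfv hadj hnonbr hi0 hin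
      (by rw [eA]; exact hub) (by rw [eA]; exact hvb') (by rw [eB]; exact hua')
      (by rw [eB]; exact hva)
  · -- a at i-1, b at i+1 : swap u and v
    have hi0 : 0 < i.1 := by omega
    have hin : i.1 + 1 < n := by omega
    have eA : q ⟨i.1 - 1, Nat.lt_of_le_of_lt (Nat.sub_le _ _) i.2⟩ = a := by
      rw [show (⟨i.1 - 1, Nat.lt_of_le_of_lt (Nat.sub_le _ _) i.2⟩ : Fin n) = ia from
        Fin.val_injective (by simp only [Fin.val_mk]; omega), hqia]
    have eB : q ⟨i.1 + 1, hin⟩ = b := by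
      rw [show (⟨i.1 + 1, hin⟩ : Fin n) = ib from
        Fin.val_injective (by simp only [Fin.val_mk]; omega), hqib]
    exact shiftlem hqinj hqz hqadj hqout huv.symm hinj hfv hfu hadj
      (fun w h1 h2 => ⟨(hnonbr w h1 h2).2, (hnonbr w h1 h2).1⟩) hi0 hin
      (by rw [eA]; exact hva) (by rw [eA]; exact hua')
      (by rw [eB]; exact hvb') (by rw [eB]; exact hub)
  · exact absurd hiaib' (by omega)

theorem stmt0 {α β : Type*} [Fintype β] (H : SimpleGraph β) (hH : IsLinearForest H)
    (G : SimpleGraph α) (hG : G.FreeInduced H) (u v : α) (huv : G.Adj u v) :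
    (G.contract u v).FreeInduced H := by
  classical
  refine ⟨fun φ => ?_⟩
  by_cases hnone : ∃ z, φ z = none
  · obtain ⟨z, hz0⟩ := hnone
    set f : β → α := fun w => Option.elim (φ w) u (fun x => x.1) with hf
    have hsome : ∀ w, w ≠ z → ∃ x, φ w = some x := by
      intro w hw
      cases hφw : φ w with
      | none => exact absurd (φ.injective (hφw.trans hz0.symm)) hw
      | some x => exact ⟨x, rfl⟩
    have hfs : ∀ (w : β) (x : {x : α // x ≠ u ∧ x ≠ v}), φ w = some x → f w = x.1 := by
      intro w x hx
      rw [hf]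
      simp [hx]
    have hinj : ∀ w w', w ≠ z → w' ≠ z → f w = f w' → w = w' := by
      intro w w' hw hw' he
      obtain ⟨x, hx⟩ := hsome w hw
      obtain ⟨x', hx'⟩ := hsome w' hw'
      rw [hfs w x hx, hfs w' x' hx'] at he
      exact φ.injective (by rw [hx, hx']; exact congrArg _ (Subtype.ext he))
    have hfu : ∀ w, w ≠ z → f w ≠ u := by
      intro w hw
      obtain ⟨x, hx⟩ := hsome w hw
      rw [hfs w x hx]
      exact x.2.1
    have hfv : ∀ w, w ≠ z → f w ≠ v := by
      intro w hw
      obtain ⟨x, hx⟩ := hsome w hw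
      rw [hfs w x hx]
      exact x.2.2
    have hadj : ∀ w w', w ≠ z → w' ≠ z → (G.Adj (f w) (f w') ↔ H.Adj w w') := by
      intro w w' hw hw'
      obtain ⟨x, hx⟩ := hsome w hw
      obtain ⟨x', hx'⟩ := hsome w' hw'
      rw [hfs w x hx, hfs w' x' hx', ← φ.map_adj_iff, hx, hx']
      exact Iff.rfl
    have hzadj : ∀ w, w ≠ z → (H.Adj z w ↔ G.Adj u (f w) ∨ G.Adj v (f w)) := by
      intro w hw
      obtain ⟨x, hx⟩ := hsome w hw
      rw [hfs w x hx, ← φ.map_adj_iff, hz0, hx]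
      exact Iff.rfl
    obtain ⟨emb⟩ := mainlem hH huv hinj hfu hfv hadj hzadj
    exact hG.false emb
  · push_neg at hnone
    have hsome : ∀ w, ∃ x, φ w = some x := fun w => Option.ne_none_iff_exists'.mp (hnone w)
    choose F hF using hsome
    refine hG.false ⟨⟨fun w => (F w).1, ?_⟩, ?_⟩
    · intro w w' he
      exact φ.injective (by rw [hF, hF]; exact congrArg _ (Subtype.ext he))
    · intro w w'
      rw [← φ.map_adj_iff, hF, hF]
      exact Iff.rfl
end

section
/- Let G and J be graphs and let C be a finite set of connected induced subgraphs of G. Define the blob graph H = H(G, C) with vertex set {v_C : C ∈ C}, where v_C and v_{C'} are adjacent if and only if the vertex sets of C and C' intersect or there is an edge of G between them. If (i) G is J-free, (ii) J has no true twins, and (iii) the class of J-free graphs is closed under edge contraction, then H is J-free. -/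
open SimpleGraph

/-- `G` contains no induced subgraph isomorphic to `H`. -/
def SimpleGraph.IndFree {α β : Type*} (G : SimpleGraph α) (H : SimpleGraph β) : Prop :=
  IsEmpty (H ↪g G)

namespace BlobProof
open SimpleGraph

lemma free_of_embedding {α β γ : Type*} {J : SimpleGraph γ} {G1 : SimpleGraph α}
    {G2 : SimpleGraph β} (f : G1 ↪g G2) (h : G2.IndFree J) : G1.IndFree J :=
  ⟨fun g => h.false (f.comp g)⟩

open Classical in
noncomputable def cmap {W : Type*} (u v : W) (x : W) : Option {y : W // y ≠ u ∧ y ≠ v} :=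
  if h : x = u ∨ x = v then none else some ⟨x, not_or.mp h⟩

variable {W : Type*} {u v : W}

lemma cmap_u : cmap u v u = none := by simp [cmap]
lemma cmap_v : cmap u v v = none := by simp [cmap]
lemma cmap_of {x : W} (h1 : x ≠ u) (h2 : x ≠ v) : cmap u v x = some ⟨x, h1, h2⟩ := by
  simp [cmap, h1, h2]
lemma cmap_eq_none {x : W} (h : cmap u v x = none) : x = u ∨ x = v := by
  by_contra hc
  push_neg at hc
  rw [cmap_of hc.1 hc.2] at h
  simp at h
lemma cmap_eq_some {x : W} {z : {y : W // y ≠ u ∧ y ≠ v}} (h : cmap u v x = some z) :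
    x = z.1 := by
  by_cases h1 : x = u ∨ x = v
  · simp [cmap, h1] at h
  · rw [cmap_of (not_or.mp h1).1 (not_or.mp h1).2] at h
    have := Option.some.inj h
    exact congrArg Subtype.val this |>.symm ▸ rfl

variable {H : SimpleGraph W}

lemma adj_cmap {x y : W} (hadj : H.Adj x y) :
    cmap u v x = cmap u v y ∨ (H.contract u v).Adj (cmap u v x) (cmap u v y) := by
  by_cases hx : x = u ∨ x = v
  · by_cases hy : y = u ∨ y = v
    · left
      have h1 : cmap u v x = none := by rcases hx with h|h <;> subst h <;> simp [cmap_u, cmap_v]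
      have h2 : cmap u v y = none := by rcases hy with h|h <;> subst h <;> simp [cmap_u, cmap_v]
      rw [h1, h2]
    · right
      have h2 := cmap_of (u := u) (v := v) (not_or.mp hy).1 (not_or.mp hy).2
      have h1 : cmap u v x = none := by rcases hx with h|h <;> subst h <;> simp [cmap_u, cmap_v]
      rw [h1, h2]
      show H.Adj u y ∨ H.Adj v y
      rcases hx with h|h <;> subst h
      · exact Or.inl hadj
      · exact Or.inr hadj
  · by_cases hy : y = u ∨ y = v
    · right
      have h1 := cmap_of (u := u) (v := v) (not_or.mp hx).1 (not_or.mp hx).2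
      have h2 : cmap u v y = none := by rcases hy with h|h <;> subst h <;> simp [cmap_u, cmap_v]
      rw [h1, h2]
      show H.Adj u x ∨ H.Adj v x
      rcases hy with h|h <;> subst h
      · exact Or.inl hadj.symm
      · exact Or.inr hadj.symm
    · right
      rw [cmap_of (not_or.mp hx).1 (not_or.mp hx).2, cmap_of (not_or.mp hy).1 (not_or.mp hy).2]
      exact hadj

lemma cmap_mem_image {S : Set W} {x : W} (hx : x ∈ S) : cmap u v x ∈ cmap u v '' S :=
  ⟨x, hx, rfl⟩

lemma reach_contract_of_walk {S : Set W} :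
    ∀ {a b : ↥S} (_ : (H.induce S).Walk a b),
      ((H.contract u v).induce (cmap u v '' S)).Reachable
        ⟨cmap u v a.1, cmap_mem_image a.2⟩ ⟨cmap u v b.1, cmap_mem_image b.2⟩ := by
  intro a b p
  induction p with
  | nil => exact SimpleGraph.Reachable.refl _
  | @cons a c b h q ih =>
    have h' : H.Adj a.1 c.1 := h
    rcases adj_cmap (u := u) (v := v) h' with heq | hadj
    · have : (⟨cmap u v a.1, cmap_mem_image a.2⟩ :
          ↥(cmap u v '' S)) = ⟨cmap u v c.1, cmap_mem_image c.2⟩ := Subtype.ext heq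
      rw [this]
      exact ih
    · have hadj' : ((H.contract u v).induce (cmap u v '' S)).Adj
          ⟨cmap u v a.1, cmap_mem_image a.2⟩ ⟨cmap u v c.1, cmap_mem_image c.2⟩ := hadj
      exact SimpleGraph.Reachable.trans hadj'.reachable ih

lemma connected_contract_image {S : Set W} (hS : (H.induce S).Connected) :
    ((H.contract u v).induce (cmap u v '' S)).Connected := by
  rw [SimpleGraph.connected_iff]
  constructor
  · rintro ⟨z, x, hx, rfl⟩ ⟨z', y, hy, rfl⟩
    have hr := hS.preconnected ⟨x, hx⟩ ⟨y, hy⟩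
    exact hr.elim fun p => reach_contract_of_walk p
  · obtain ⟨⟨x, hx⟩⟩ := hS.nonempty
    exact ⟨⟨cmap u v x, cmap_mem_image hx⟩⟩

lemma reach_induce_of_support {V : Type*} {G : SimpleGraph V} {C D : Set V} :
    ∀ {a b : ↥C} (p : (G.induce C).Walk a b) (hsub : ∀ z ∈ p.support, (z : V) ∈ D),
      (G.induce D).Reachable ⟨a.1, hsub a p.start_mem_support⟩ ⟨b.1, hsub b p.end_mem_support⟩ := by
  intro a b p
  induction p with
  | nil => intro _; exact SimpleGraph.Reachable.refl _
  | @cons a c b h q ih =>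
    intro hsub
    have hsub' : ∀ z ∈ q.support, (z : V) ∈ D := by
      intro z hz
      exact hsub z (by rw [SimpleGraph.Walk.support_cons]; exact List.mem_cons_of_mem _ hz)
    have ha : (a : V) ∈ D := hsub a (SimpleGraph.Walk.start_mem_support _)
    have hc : (c : V) ∈ D := hsub' c (SimpleGraph.Walk.start_mem_support _)
    have hadj : (G.induce D).Adj ⟨a.1, ha⟩ ⟨c.1, hc⟩ := (h : G.Adj a.1 c.1)
    exact SimpleGraph.Reachable.trans hadj.reachable (ih hsub')

lemma exists_finite_connected_hull {V : Type*} {G : SimpleGraph V} {C : Set V}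
    (hC : (G.induce C).Connected) {S : Set V} (hS : S.Finite) (hSC : S ⊆ C) :
    ∃ D : Set V, S ⊆ D ∧ D ⊆ C ∧ D.Finite ∧ D.Nonempty ∧ (G.induce D).Connected := by
  classical
  obtain ⟨⟨p0, hp0⟩⟩ := hC.nonempty
  haveI := hS.to_subtype
  have hwalk : ∀ s : ↥S, Nonempty ((G.induce C).Walk ⟨p0, hp0⟩ ⟨s.1, hSC s.2⟩) :=
    fun s => hC.preconnected _ _
  let w : ∀ s : ↥S, (G.induce C).Walk ⟨p0, hp0⟩ ⟨s.1, hSC s.2⟩ := fun s => (hwalk s).some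
  refine ⟨insert p0 (⋃ s : ↥S, Subtype.val '' {z : ↥C | z ∈ (w s).support}), ?_, ?_, ?_, ?_, ?_⟩
  · intro x hx
    refine Set.mem_insert_iff.mpr (Or.inr ?_)
    exact Set.mem_iUnion.mpr ⟨⟨x, hx⟩, ⟨⟨x, hSC hx⟩, SimpleGraph.Walk.end_mem_support _, rfl⟩⟩
  · intro x hx
    rcases Set.mem_insert_iff.mp hx with rfl | hx
    · exact hp0
    · obtain ⟨s, ⟨z, _, rfl⟩⟩ := Set.mem_iUnion.mp hx
      exact z.2
  · exact Set.Finite.insert _ (Set.finite_iUnion fun s => ((w s).support.finite_toSet).image _)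
  · exact ⟨p0, Set.mem_insert _ _⟩
  · set D := insert p0 (⋃ s : ↥S, Subtype.val '' {z : ↥C | z ∈ (w s).support}) with hD
    have hp0D : p0 ∈ D := Set.mem_insert _ _
    have key : ∀ x (hx : x ∈ D), (G.induce D).Reachable ⟨p0, hp0D⟩ ⟨x, hx⟩ := by
      intro x hx
      rcases Set.mem_insert_iff.mp hx with rfl | hx'
      · exact SimpleGraph.Reachable.refl _
      · obtain ⟨s, ⟨z, hzsup, rfl⟩⟩ := Set.mem_iUnion.mp hx'
        let q := (w s).takeUntil z hzsup
        have hqsub : ∀ y ∈ q.support, (y : V) ∈ D := by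
          intro y hy
          refine Set.mem_insert_iff.mpr (Or.inr (Set.mem_iUnion.mpr ⟨s, ⟨y, ?_, rfl⟩⟩))
          exact SimpleGraph.Walk.support_takeUntil_subset _ hzsup hy
        exact reach_induce_of_support q hqsub
    rw [SimpleGraph.connected_iff]
    refine ⟨?_, ⟨⟨p0, hp0D⟩⟩⟩
    rintro ⟨x, hx⟩ ⟨y, hy⟩
    exact SimpleGraph.Reachable.trans (key x hx).symm (key y hy)

universe w

lemma no_disjoint_rep {β : Type*} [Fintype β] (J : SimpleGraph β)
    (hcontract : ∀ {γ : Type w} (G' : SimpleGraph γ) (x y : γ), G'.Adj x y →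
      G'.IndFree J → (G'.contract x y).IndFree J) :
    ∀ (n : ℕ) (δ : Type w) (H : SimpleGraph δ), H.IndFree J → ∀ (E : β → Set δ),
      (∀ b, (E b).Finite) → (∀ b, (E b).Nonempty) →
      (∀ b, (H.induce (E b)).Connected) →
      (∀ b b', b ≠ b' → Disjoint (E b) (E b')) →
      (∀ b b', b ≠ b' → (J.Adj b b' ↔ ∃ x ∈ E b, ∃ y ∈ E b', H.Adj x y)) →
      (∑ b, (E b).ncard = n) → False := by
  intro n
  induction n using Nat.strong_induction_on with
  | _ n ih =>
  intro δ H hH E hfin hne hconn hdisj hiff htot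
  by_cases hsing : ∀ b, (E b).ncard = 1
  · -- base case : singletons give an embedding of J into H
    have hx : ∀ b, ∃ x, E b = {x} := fun b => Set.ncard_eq_one.mp (hsing b)
    choose x hxE using hx
    have hinj : Function.Injective x := by
      intro b b' hbb'
      by_contra hne'
      have := hdisj b b' hne'
      rw [hxE b, hxE b', hbb'] at this
      exact absurd this (Set.not_disjoint_iff.mpr ⟨x b', Set.mem_singleton _, Set.mem_singleton _⟩)
    have hmap : ∀ {b b'}, H.Adj (x b) (x b') ↔ J.Adj b b' := by
      intro b b'
      by_cases hbb' : b = b'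
      · subst hbb'
        simp [H.loopless, J.loopless]
      · rw [hiff b b' hbb']
        constructor
        · intro h
          exact ⟨x b, by rw [hxE b]; rfl, x b', by rw [hxE b']; rfl, h⟩
        · rintro ⟨a, ha, c, hc, hadj⟩
          rw [hxE b] at ha
          rw [hxE b'] at hc
          rw [Set.mem_singleton_iff] at ha hc
          rwa [ha, hc] at hadj
    exact hH.false ⟨⟨x, hinj⟩, hmap⟩
  · -- inductive step : contract an edge inside a non-singleton piece
    push_neg at hsing
    obtain ⟨b0, hb0⟩ := hsing
    have h1le : 1 ≤ (E b0).ncard := (Set.ncard_pos (hfin b0)).mpr (hne b0)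
    have h1lt : 1 < (E b0).ncard := lt_of_le_of_ne h1le (Ne.symm hb0)
    obtain ⟨u0, v0, hu0, hv0, huv0⟩ := (Set.one_lt_ncard_iff (hfin b0)).mp h1lt
    obtain ⟨p⟩ := (hconn b0).preconnected ⟨u0, hu0⟩ ⟨v0, hv0⟩
    cases p with
    | nil => exact huv0 rfl
    | @cons _ c _ h q =>
      clear q
      have hadj : H.Adj u0 c.1 := h
      set u := u0 with hu
      set v := c.1 with hv
      have hvmem : v ∈ E b0 := c.2
      have humem : u ∈ E b0 := hu0
      have hune : u ≠ v := hadj.ne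
      have hH' := hcontract H u v hadj hH
      set E' : β → Set (Option {x : δ // x ≠ u ∧ x ≠ v}) := fun b => cmap u v '' E b with hE'
      have hmemb0 : ∀ x : δ, (x = u ∨ x = v) → ∀ b, x ∈ E b → b = b0 := by
        intro x hxuv b hxb
        by_contra hbb0
        have hx0 : x ∈ E b0 := by rcases hxuv with rfl | rfl <;> assumption
        exact (Set.not_disjoint_iff.mpr ⟨x, hxb, hx0⟩) (hdisj b b0 hbb0)
      have hnonecase : ∀ b, (none : Option {x : δ // x ≠ u ∧ x ≠ v}) ∈ E' b → b = b0 := by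
        rintro b ⟨x, hxb, hcx⟩
        exact hmemb0 x (cmap_eq_none hcx) b hxb
      refine ih (∑ b, (E' b).ncard) ?_ _ (H.contract u v) hH' E'
        (fun b => (hfin b).image _) (fun b => (hne b).image _)
        (fun b => connected_contract_image (hconn b)) ?_ ?_ rfl
      · -- the measure strictly decreases
        rw [← htot]
        apply Finset.sum_lt_sum
        · intro b _
          exact Set.ncard_image_le (hfin b)
        · refine ⟨b0, Finset.mem_univ _, ?_⟩
          have himg : E' b0 = cmap u v '' (E b0 \ {v}) := by
            apply Set.Subset.antisymm
            · rintro z ⟨x, hxb, rfl⟩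
              by_cases hxv : x = v
              · subst hxv
                refine ⟨u, ⟨humem, by simpa using hune⟩, ?_⟩
                rw [cmap_u, cmap_v]
              · exact ⟨x, ⟨hxb, hxv⟩, rfl⟩
            · exact Set.image_mono (Set.diff_subset)
          rw [himg]
          calc (cmap u v '' (E b0 \ {v})).ncard
              ≤ (E b0 \ {v}).ncard := Set.ncard_image_le ((hfin b0).diff)
            _ < (E b0).ncard := Set.ncard_diff_singleton_lt_of_mem hvmem (hfin b0)
      · -- disjointness
        intro b b' hbb'
        rw [Set.disjoint_left]
        rintro z ⟨x, hxb, rfl⟩ ⟨y, hyb', hcyx⟩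
        cases hz : cmap u v x with
        | none =>
          have hb := hnonecase b ⟨x, hxb, hz⟩
          have hb' := hnonecase b' ⟨y, hyb', by rw [hcyx, hz]⟩
          exact hbb' (hb.trans hb'.symm)
        | some t =>
          have hx := cmap_eq_some hz
          have hy := cmap_eq_some (by rw [hcyx, hz] : cmap u v y = some t)
          have : x = y := hx.trans hy.symm
          subst this
          exact (Set.not_disjoint_iff.mpr ⟨x, hxb, hyb'⟩) (hdisj b b' hbb')
      · -- adjacency iff
        intro b b' hbb'
        rw [hiff b b' hbb']
        constructor
        · rintro ⟨x, hxb, y, hyb', hxy⟩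
          rcases adj_cmap (u := u) (v := v) hxy with heq | hadj'
          · exfalso
            cases hcx : cmap u v x with
            | none =>
              have hcy : cmap u v y = none := by rw [← heq, hcx]
              have hb := hnonecase b ⟨x, hxb, hcx⟩
              have hb' := hnonecase b' ⟨y, hyb', hcy⟩
              exact hbb' (hb.trans hb'.symm)
            | some t =>
              have hcy : cmap u v y = some t := by rw [← heq, hcx]
              have : x = y := (cmap_eq_some hcx).trans (cmap_eq_some hcy).symm
              exact hxy.ne this
          · exact ⟨cmap u v x, ⟨x, hxb, rfl⟩, cmap u v y, ⟨y, hyb', rfl⟩, hadj'⟩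
        · rintro ⟨z, ⟨x, hxb, rfl⟩, z', ⟨y, hyb', rfl⟩, hzz'⟩
          cases hcx : cmap u v x with
          | none =>
            have hb := hnonecase b ⟨x, hxb, hcx⟩
            subst hb
            cases hcy : cmap u v y with
            | none =>
              exfalso
              rw [hcx, hcy] at hzz'
              exact hzz'
            | some t =>
              have hyt : y = t.1 := cmap_eq_some hcy
              rw [hcx, hcy] at hzz'
              rcases (hzz' : H.Adj u t.1 ∨ H.Adj v t.1) with h' | h'
              · exact ⟨u, humem, y, hyb', by rwa [hyt]⟩
              · exact ⟨v, hvmem, y, hyb', by rwa [hyt]⟩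
          | some t =>
            have hxt : x = t.1 := cmap_eq_some hcx
            cases hcy : cmap u v y with
            | none =>
              have hb' := hnonecase b' ⟨y, hyb', hcy⟩
              subst hb'
              rw [hcx, hcy] at hzz'
              rcases (hzz' : H.Adj u t.1 ∨ H.Adj v t.1) with h' | h'
              · exact ⟨x, hxb, u, humem, by rw [hxt]; exact h'.symm⟩
              · exact ⟨x, hxb, v, hvmem, by rw [hxt]; exact h'.symm⟩
            | some t' =>
              have hyt : y = t'.1 := cmap_eq_some hcy
              rw [hcx, hcy] at hzz'
              exact ⟨x, hxb, y, hyb', by rw [hxt, hyt]; exact hzz'⟩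

lemma connected_of_iso {A B : Type*} {GA : SimpleGraph A} {GB : SimpleGraph B}
    (φ : GA ≃g GB) (h : GA.Connected) : GB.Connected :=
  h.map φ.toHom φ.toEquiv.surjective

def isoInduceImage {A B : Type*} {GA : SimpleGraph A} {GB : SimpleGraph B}
    (φ : GA ≃g GB) (S : Set A) : GA.induce S ≃g GB.induce (⇑φ '' S) where
  toEquiv := Equiv.image φ.toEquiv S
  map_rel_iff' := by
    intro a b
    exact φ.map_rel_iff

lemma connected_induce_image_iso {A B : Type*} {GA : SimpleGraph A} {GB : SimpleGraph B}
    (φ : GA ≃g GB) {S : Set A} (h : (GA.induce S).Connected) :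
    (GB.induce (⇑φ '' S)).Connected :=
  connected_of_iso (isoInduceImage φ S) h

section Blowup
variable {α β : Type*} (G : SimpleGraph α) (J : SimpleGraph β) (D : β → Set α)

def blowup : SimpleGraph {p : α × β // p.1 ∈ D p.2} where
  Adj p q := (p.1.1 = q.1.1 ∧ p.1.2 ≠ q.1.2) ∨ G.Adj p.1.1 q.1.1
  symm := by
    refine ⟨?_⟩
    rintro p q (⟨h1, h2⟩ | h)
    · exact Or.inl ⟨h1.symm, h2.symm⟩
    · exact Or.inr h.symm
  loopless := by
    refine ⟨?_⟩
    rintro p (⟨h1, h2⟩ | h)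
    · exact h2 rfl
    · exact G.loopless.irrefl _ h

variable {G J D}

lemma blowup_free (hGJ : G.IndFree J) (htwins : ∀ x y : β, ¬ J.TrueTwins x y) :
    (blowup G D).IndFree J := by
  constructor
  intro g
  by_cases hcase : ∃ b b' : β, b ≠ b' ∧ (g b).1.1 = (g b').1.1
  · obtain ⟨b, b', hne, heq⟩ := hcase
    apply htwins b b'
    have hsnd : (g b).1.2 ≠ (g b').1.2 := by
      intro h2
      exact hne (g.injective (Subtype.ext (Prod.ext heq h2)))
    have hJbb' : J.Adj b b' := g.map_adj_iff.mp (Or.inl ⟨heq, hsnd⟩)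
    refine ⟨hJbb', ?_⟩
    intro w hwb hwb'
    have key : ∀ c : β, c ≠ w → (J.Adj c w ↔ ((g c).1.1 = (g w).1.1 ∨ G.Adj (g c).1.1 (g w).1.1)) := by
      intro c hcw
      rw [← g.map_adj_iff]
      constructor
      · rintro (⟨h1, _⟩ | h)
        · exact Or.inl h1
        · exact Or.inr h
      · rintro (h1 | h)
        · refine Or.inl ⟨h1, ?_⟩
          intro h2
          exact hcw (g.injective (Subtype.ext (Prod.ext h1 h2)))
        · exact Or.inr h
    rw [key b (Ne.symm hwb), key b' (Ne.symm hwb'), heq]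
  · push_neg at hcase
    have hinj : Function.Injective (fun b => (g b).1.1) := by
      intro b b' h
      by_contra hne
      exact (hcase b b' hne) h
    refine hGJ.false ⟨⟨fun b => (g b).1.1, hinj⟩, ?_⟩
    intro b b'
    show G.Adj (g b).1.1 (g b').1.1 ↔ J.Adj b b'
    by_cases hbb' : b = b'
    · subst hbb'
      simp [G.loopless, J.loopless]
    · rw [← g.map_adj_iff]
      constructor
      · intro h
        exact Or.inr h
      · rintro (⟨h1, _⟩ | h)
        · exact absurd h1 (hcase b b' hbb')
        · exact h

end Blowup

section Fiber
variable {α β : Type*} {G : SimpleGraph α} {D : β → Set α}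

def fiber (D : β → Set α) (b : β) : Set {p : α × β // p.1 ∈ D p.2} := {p | p.1.2 = b}

def fiberIso (b : β) : (blowup G D).induce (fiber D b) ≃g G.induce (D b) where
  toEquiv :=
    { toFun := fun q => ⟨q.1.1.1, by have h := q.1.2; rwa [q.2] at h⟩
      invFun := fun x => ⟨⟨(x.1, b), x.2⟩, rfl⟩
      left_inv := by
        rintro ⟨⟨⟨x, b'⟩, hmem⟩, hb⟩
        have hb' : b' = b := hb
        subst hb'
        rfl
      right_inv := fun x => rfl }
  map_rel_iff' := by
    rintro ⟨p, hp⟩ ⟨q, hq⟩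
    show G.Adj p.1.1 q.1.1 ↔ (blowup G D).Adj p q
    constructor
    · intro h
      exact Or.inr h
    · rintro (⟨-, h2⟩ | h)
      · exact absurd ((hp : p.1.2 = b).trans (hq : q.1.2 = b).symm) h2
      · exact h

end Fiber

end BlobProof

open BlobProof in
theorem stmt3 {α β : Type*} (G : SimpleGraph α) (J : SimpleGraph β)
    (𝒞 : Set (Set α)) (h𝒞fin : 𝒞.Finite)
    (hconn : ∀ C ∈ 𝒞, (G.induce C).Connected)
    (hGJ : G.IndFree J)
    (htwins : ∀ x y : β, ¬ J.TrueTwins x y)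
    (hcontract : ∀ {γ : Type*} (G' : SimpleGraph γ) (x y : γ), G'.Adj x y →
      G'.IndFree J → (G'.contract x y).IndFree J) :
    (blob G 𝒞).IndFree J := by
  classical
  refine ⟨fun f => ?_⟩
  haveI : Finite ↥𝒞 := h𝒞fin.to_subtype
  haveI : Finite β := Finite.of_injective (⇑f) f.injective
  haveI : Fintype β := Fintype.ofFinite β
  set C : β → Set α := fun b => (f b).1 with hC
  have hCconn : ∀ b, (G.induce (C b)).Connected := fun b => hconn _ (f b).2
  have hCiff : ∀ b b', b ≠ b' →
      (J.Adj b b' ↔ ((C b ∩ C b').Nonempty ∨ ∃ x ∈ C b, ∃ y ∈ C b', G.Adj x y)) := by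
    intro b b' hbb'
    rw [← f.map_adj_iff]
    constructor
    · rintro ⟨-, h⟩
      exact h
    · intro h
      exact ⟨fun hEq => hbb' (f.injective hEq), h⟩
  -- choose witnesses for adjacent pairs
  have hwit : ∀ b b', J.Adj b b' →
      ∃ q : α × α, q.1 ∈ C b ∧ q.2 ∈ C b' ∧ (q.1 = q.2 ∨ G.Adj q.1 q.2) := by
    intro b b' h
    rcases (hCiff b b' h.ne).mp h with ⟨x, hx⟩ | ⟨x, hx, y, hy, hxy⟩
    · exact ⟨(x, x), hx.1, hx.2, Or.inl rfl⟩
    · exact ⟨(x, y), hx, hy, Or.inr hxy⟩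
  choose wit hw1 hw2 hw3 using hwit
  -- a finite set of required vertices inside each C b
  set S : β → Set α := fun b => ⋃ b' : β,
      ((if h : J.Adj b b' then {(wit b b' h).1} else ∅) ∪
       (if h : J.Adj b' b then {(wit b' b h).2} else ∅)) with hS
  have hSfin : ∀ b, (S b).Finite := by
    intro b
    apply Set.finite_iUnion
    intro b'
    apply Set.Finite.union <;> (split <;> simp)
  have hSsub : ∀ b, S b ⊆ C b := by
    intro b x hx
    obtain ⟨b', hb'⟩ := Set.mem_iUnion.mp hx
    rcases hb' with h | h
    · split at h
      · rw [Set.mem_singleton_iff] at h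
        subst h
        exact hw1 _ _ _
      · exact absurd h (Set.notMem_empty x)
    · split at h
      · rw [Set.mem_singleton_iff] at h
        subst h
        exact hw2 _ _ _
      · exact absurd h (Set.notMem_empty x)
  -- finite connected hulls
  have hDex := fun b => exists_finite_connected_hull (hCconn b) (hSfin b) (hSsub b)
  choose D hDS hDC hDfin hDne hDconn using hDex
  have hDiff : ∀ b b', b ≠ b' →
      (J.Adj b b' ↔ ((D b ∩ D b').Nonempty ∨ ∃ x ∈ D b, ∃ y ∈ D b', G.Adj x y)) := by
    intro b b' hbb'
    constructor
    · intro h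
      have hm1 : (wit b b' h).1 ∈ D b := by
        apply hDS
        refine Set.mem_iUnion.mpr ⟨b', Or.inl ?_⟩
        rw [dif_pos h]
        rfl
      have hm2 : (wit b b' h).2 ∈ D b' := by
        apply hDS
        refine Set.mem_iUnion.mpr ⟨b, Or.inr ?_⟩
        rw [dif_pos h]
        rfl
      rcases hw3 b b' h with heq | hadj
      · exact Or.inl ⟨(wit b b' h).1, hm1, by rw [heq]; exact hm2⟩
      · exact Or.inr ⟨_, hm1, _, hm2, hadj⟩
    · intro h
      apply (hCiff b b' hbb').mpr
      rcases h with ⟨x, hx1, hx2⟩ | ⟨x, hx, y, hy, hxy⟩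
      · exact Or.inl ⟨x, hDC b hx1, hDC b' hx2⟩
      · exact Or.inr ⟨x, hDC b hx, y, hDC b' hy, hxy⟩
  -- the blow-up graph is J-free
  have hWfree : (blowup G D).IndFree J := blowup_free hGJ htwins
  -- it is finite
  haveI hVTfin : Finite {p : α × β // p.1 ∈ D p.2} := by
    have hU : (⋃ b, D b).Finite := Set.finite_iUnion hDfin
    haveI := hU.to_subtype
    refine Finite.of_injective
      (fun p => ((⟨p.1.1, Set.mem_iUnion.mpr ⟨p.1.2, p.2⟩⟩ : ↥(⋃ b, D b)), p.1.2)) ?_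
    rintro ⟨⟨x, b⟩, hp⟩ ⟨⟨y, b'⟩, hq⟩ h
    have h1 : x = y := congrArg (fun z => (z.1 : α)) h
    have h2 : b = b' := congrArg Prod.snd h
    subst h1; subst h2
    rfl
  -- fibers give a disjoint representation in the blow-up
  set F : β → Set {p : α × β // p.1 ∈ D p.2} := fiber D with hF
  have hFne : ∀ b, (F b).Nonempty := by
    intro b
    obtain ⟨x, hx⟩ := hDne b
    exact ⟨⟨(x, b), hx⟩, rfl⟩
  have hFconn : ∀ b, ((blowup G D).induce (F b)).Connected :=
    fun b => connected_of_iso (fiberIso b).symm (hDconn b)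
  have hFdisj : ∀ b b', b ≠ b' → Disjoint (F b) (F b') := by
    intro b b' hbb'
    rw [Set.disjoint_left]
    intro p hp hp'
    exact hbb' ((hp : p.1.2 = b).symm.trans (hp' : p.1.2 = b'))
  have hFiff : ∀ b b', b ≠ b' →
      (J.Adj b b' ↔ ∃ p ∈ F b, ∃ q ∈ F b', (blowup G D).Adj p q) := by
    intro b b' hbb'
    rw [hDiff b b' hbb']
    constructor
    · rintro (⟨x, hx1, hx2⟩ | ⟨x, hx, y, hy, hxy⟩)
      · exact ⟨⟨(x, b), hx1⟩, rfl, ⟨(x, b'), hx2⟩, rfl, Or.inl ⟨rfl, hbb'⟩⟩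
      · exact ⟨⟨(x, b), hx⟩, rfl, ⟨(y, b'), hy⟩, rfl, Or.inr hxy⟩
    · rintro ⟨p, hp, q, hq, (⟨h1, -⟩ | h)⟩
      · refine Or.inl ⟨p.1.1, ?_, ?_⟩
        · have := p.2
          rwa [(hp : p.1.2 = b)] at this
        · have := q.2
          rw [(hq : q.1.2 = b')] at this
          rwa [h1]
      · refine Or.inr ⟨p.1.1, ?_, q.1.1, ?_, h⟩
        · have := p.2
          rwa [(hp : p.1.2 = b)] at this
        · have := q.2
          rwa [(hq : q.1.2 = b')] at this
  -- transport to a small universe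
  haveI : Fintype {p : α × β // p.1 ∈ D p.2} := Fintype.ofFinite _
  set N := Fintype.card {p : α × β // p.1 ∈ D p.2} with hN
  set e : {p : α × β // p.1 ∈ D p.2} ≃ ULift (Fin N) :=
    (Fintype.equivFin _).trans Equiv.ulift.symm with he
  set W0 : SimpleGraph (ULift (Fin N)) := SimpleGraph.comap (⇑e.symm) (blowup G D) with hW0
  have iso : blowup G D ≃g W0 :=
    ⟨e, by intro a b; show (blowup G D).Adj (e.symm (e a)) (e.symm (e b)) ↔ _; rw [e.symm_apply_apply, e.symm_apply_apply]⟩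
  have hW0free : W0.IndFree J := free_of_embedding iso.symm.toEmbedding hWfree
  refine no_disjoint_rep J (fun G' x y h1 h2 => hcontract G' x y h1 h2)
    (∑ b, ((⇑iso '' F b : Set (ULift (Fin N))).ncard)) (ULift (Fin N)) W0 hW0free
    (fun b => ⇑iso '' F b) (fun b => Set.toFinite _) (fun b => (hFne b).image _)
    (fun b => connected_induce_image_iso iso (hFconn b)) ?_ ?_ rfl
  · intro b b' hbb'
    exact (Set.disjoint_image_iff iso.injective).mpr (hFdisj b b' hbb')
  · intro b b' hbb'
    rw [hFiff b b' hbb']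
    constructor
    · rintro ⟨p, hp, q, hq, h⟩
      exact ⟨iso p, ⟨p, hp, rfl⟩, iso q, ⟨q, hq, rfl⟩, iso.map_adj_iff.mpr h⟩
    · rintro ⟨z, ⟨p, hp, rfl⟩, z', ⟨q, hq, rfl⟩, h⟩
      exact ⟨p, hp, q, hq, iso.map_adj_iff.mp h⟩
end
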